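/- Let V_d = ℂ² ⊗ ℂ[z]/(z^{d+1}) with the action of 𝔤_d = 𝔰𝔩₂ ⊗ ℂ[z]/(z^{d+1}). For 0 ≤ n ≤ d+1, the set of x ∈ V_d with min.deg x = n (where min.deg 0 := d+1) equals the set of elements whose 𝔤_d-orbit tangent space 𝔤_d.x has dimension exactly 2(d+1−n), and this set has dimension 2(d+1−n) as an algebraic variety (it is (T∖{0})z^n ⊕ Tz^{n+1} ⊕ ... ⊕ Tz^d). Consequently the modality of the 𝔤_d-action on V_d is 0: for every s, the locus of points with orbit dimension s has dimension at most s. -/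

import Mathlib

set_option synthInstance.maxHeartbeats 1000000
set_option maxHeartbeats 2000000

open Polynomial

noncomputable abbrev Rtc (d : ℕ) := Polynomial ℂ ⧸ Ideal.span {(X : Polynomial ℂ) ^ (d + 1)}

noncomputable def zz (d : ℕ) : Rtc d := Ideal.Quotient.mk _ X

/-- `η ↦ η.mulVec x`, linear in the matrix `η`. -/
noncomputable def mulVecRight (d : ℕ) (x : Fin 2 → Rtc d) :
    Matrix (Fin 2) (Fin 2) (Rtc d) →ₗ[Rtc d] (Fin 2 → Rtc d) where
  toFun A := A.mulVec x
  map_add' A B := Matrix.add_mulVec A B x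
  map_smul' c A := by
    simp only [RingHom.id_apply]
    exact Matrix.smul_mulVec c A x

/-- The orbit tangent space `𝔤_d.x = {η.x : η ∈ 𝔰𝔩₂ ⊗ ℂ[z]/(z^{d+1})}`, as a `ℂ`-submodule. -/
noncomputable def orbitTangent (d : ℕ) (x : Fin 2 → Rtc d) :
    Submodule ℂ (Fin 2 → Rtc d) :=
  Submodule.restrictScalars ℂ
    ((LinearMap.ker (Matrix.traceLinearMap (Fin 2) (Rtc d) (Rtc d))).map (mulVecRight d x))

/-- `min.deg x = n` (with `min.deg 0 = d+1`): `x` is divisible by `z^n` but, unless `n = d+1`,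
not by `z^{n+1}`. -/
def MinDegEq (d n : ℕ) (x : Fin 2 → Rtc d) : Prop :=
  (∃ y, x = (zz d) ^ n • y) ∧ (n = d + 1 ∨ ¬∃ y, x = (zz d) ^ (n + 1) • y)

lemma mk_smul (d : ℕ) (a : ℂ) (r : Polynomial ℂ) :
    a • (Ideal.Quotient.mk (Ideal.span {(X : Polynomial ℂ) ^ (d + 1)}) r : Rtc d)
      = Ideal.Quotient.mk _ (C a * r) := by
  have : a • (Ideal.Quotient.mk (Ideal.span {(X : Polynomial ℂ) ^ (d + 1)}) r : Rtc d)
      = Ideal.Quotient.mk _ (a • r) := rfl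
  rw [this, smul_eq_C_mul]

lemma zz_pow_eq_zero (d k : ℕ) (h : d + 1 ≤ k) : (zz d) ^ k = 0 := by
  have h1 : (zz d) ^ (d+1) = 0 := by
    rw [zz, ← map_pow, Ideal.Quotient.eq_zero_iff_mem]
    exact Ideal.subset_span rfl
  calc (zz d) ^ k = (zz d)^(d+1) * (zz d)^(k - (d+1)) := by rw [← pow_add]; congr 1; omega
  _ = 0 := by rw [h1, zero_mul]

lemma mk_C_mul_X_pow (d : ℕ) (a : ℂ) (i : ℕ) :
    Ideal.Quotient.mk (Ideal.span {(X : Polynomial ℂ) ^ (d + 1)}) (C a * X ^ i)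
      = a • (zz d) ^ i := by
  have h : (zz d) ^ i = Ideal.Quotient.mk (Ideal.span {(X : Polynomial ℂ) ^ (d + 1)}) (X ^ i) := by
    rw [zz, map_pow]
  rw [h, mk_smul]

lemma repr_exists (d : ℕ) (r : Rtc d) : ∃ c : Fin (d+1) → ℂ, r = ∑ i, c i • (zz d) ^ (i:ℕ) := by
  obtain ⟨p, rfl⟩ := Ideal.Quotient.mk_surjective r
  set q : Polynomial ℂ := p %ₘ (X ^ (d+1)) with hq
  have hmon : (X ^ (d+1) : Polynomial ℂ).Monic := monic_X_pow _
  have hdeg : q.natDegree < d + 1 := by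
    rcases eq_or_ne q 0 with h0 | h0
    · simp [h0]
    · have := degree_modByMonic_lt p hmon
      rw [degree_X_pow] at this
      exact (natDegree_lt_iff_degree_lt h0).2 (by exact_mod_cast this)
  have hqq : Ideal.Quotient.mk (Ideal.span {(X : Polynomial ℂ) ^ (d + 1)}) p
      = Ideal.Quotient.mk (Ideal.span {(X : Polynomial ℂ) ^ (d + 1)}) q := by
    rw [Ideal.Quotient.eq]
    have : p - q = X ^ (d+1) * (p /ₘ (X ^ (d+1))) := by
      conv_lhs => rw [← modByMonic_add_div p (X ^ (d+1))]
      ring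
    rw [this]
    exact Ideal.mem_span_singleton.2 ⟨_, rfl⟩
  refine ⟨fun i => q.coeff i, ?_⟩
  rw [hqq]
  conv_lhs => rw [q.as_sum_range' (d+1) hdeg]
  rw [map_sum, Fin.sum_univ_eq_sum_range (fun i => q.coeff i • (zz d) ^ i)]
  refine Finset.sum_congr rfl fun i _ => ?_
  rw [← C_mul_X_pow_eq_monomial, mk_C_mul_X_pow]

lemma li (d : ℕ) : LinearIndependent ℂ (fun i : Fin (d+1) => (zz d) ^ (i:ℕ)) := by
  rw [Fintype.linearIndependent_iff]
  intro g hg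
  by_contra hne
  push_neg at hne
  obtain ⟨i0, hi0⟩ := hne
  set p : Polynomial ℂ := ∑ i : Fin (d+1), C (g i) * X ^ (i:ℕ) with hp
  have hmk : Ideal.Quotient.mk (Ideal.span {(X : Polynomial ℂ) ^ (d + 1)}) p = 0 := by
    rw [hp, map_sum, ← hg]
    refine Finset.sum_congr rfl fun i _ => ?_
    rw [mk_C_mul_X_pow]
  have hpc : p.coeff (i0 : ℕ) = g i0 := by
    rw [hp, finset_sum_coeff]
    rw [Finset.sum_eq_single i0]
    · simp
    · intro b _ hb
      rw [coeff_C_mul, coeff_X_pow, if_neg (fun h => hb (Fin.ext h).symm), mul_zero]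
    · intro h; exact absurd (Finset.mem_univ i0) h
  have hp0 : p ≠ 0 := fun h => hi0 (by rw [← hpc, h, coeff_zero])
  have hdvd : (X : Polynomial ℂ) ^ (d+1) ∣ p := by
    rw [Ideal.Quotient.eq_zero_iff_mem] at hmk
    exact Ideal.mem_span_singleton.1 hmk
  have hdegle : p.natDegree ≤ d := by
    apply natDegree_sum_le_of_forall_le
    intro i _
    apply le_trans (natDegree_C_mul_le _ _)
    simpa using Nat.lt_succ_iff.mp i.isLt
  obtain ⟨s, hps⟩ := hdvd
  have hs : s ≠ 0 := fun h => hp0 (by rw [hps, h, mul_zero])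
  have := natDegree_mul (pow_ne_zero (d+1) (X_ne_zero (R := ℂ))) hs
  rw [← hps, natDegree_X_pow] at this
  omega

lemma unit_or_dvd (d : ℕ) (r : Rtc d) : IsUnit r ∨ ∃ s, r = zz d * s := by
  obtain ⟨p, rfl⟩ := Ideal.Quotient.mk_surjective r
  rcases eq_or_ne (p.coeff 0) 0 with h0 | h0
  · obtain ⟨q, hq⟩ := X_dvd_iff.2 h0
    exact Or.inr ⟨Ideal.Quotient.mk _ q, by rw [hq, map_mul]; rfl⟩
  · left
    have hps : Ideal.Quotient.mk (Ideal.span {(X : Polynomial ℂ) ^ (d + 1)}) p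
        = Ideal.Quotient.mk _ (C (p.coeff 0)) + zz d * Ideal.Quotient.mk _ p.divX := by
      rw [zz, ← map_mul, ← map_add]
      congr 1
      rw [add_comm]
      exact (X_mul_divX_add p).symm
    rw [hps]
    have hu : IsUnit (Ideal.Quotient.mk (Ideal.span {(X : Polynomial ℂ) ^ (d + 1)})
        (C (p.coeff 0))) := (isUnit_C.2 (isUnit_iff_ne_zero.2 h0)).map _
    have hnil : IsNilpotent (zz d * Ideal.Quotient.mk (Ideal.span {(X : Polynomial ℂ) ^ (d + 1)}) p.divX) := by
      refine ⟨d + 1, ?_⟩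
      rw [mul_pow, zz_pow_eq_zero d (d+1) le_rfl, zero_mul]
    exact hnil.isUnit_add_left_of_commute hu (Commute.all _ _)

lemma exists_minDegEq (d : ℕ) (x : Fin 2 → Rtc d) : ∃ n, n ≤ d + 1 ∧ MinDegEq d n x := by
  classical
  set P : ℕ → Prop := fun k => ∃ y : Fin 2 → Rtc d, x = (zz d) ^ k • y with hP
  have h0 : P 0 := ⟨x, by simp⟩
  refine ⟨Nat.findGreatest P (d+1), Nat.findGreatest_le _, Nat.findGreatest_spec (Nat.zero_le _) h0, ?_⟩
  rcases eq_or_ne (Nat.findGreatest P (d+1)) (d+1) with h | h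
  · exact Or.inl h
  · have hle : Nat.findGreatest P (d+1) ≤ d + 1 := Nat.findGreatest_le (d+1)
    have : ¬ P (Nat.findGreatest P (d+1) + 1) :=
      Nat.findGreatest_is_greatest (Nat.lt_succ_self _) (by omega)
    exact Or.inr this

lemma minDegEq_unique (d : ℕ) {m n : ℕ} {x : Fin 2 → Rtc d} (hm' : m ≤ d+1) (hn' : n ≤ d+1)
    (hm : MinDegEq d m x) (hn : MinDegEq d n x) : m = n := by
  have key : ∀ a b : ℕ, a < b → b ≤ d + 1 → MinDegEq d a x → MinDegEq d b x → False := by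
    intro a b hlt hb' ha hbb
    obtain ⟨y, hy⟩ := hbb.1
    have hdvd : ∃ y, x = (zz d) ^ (a+1) • y := by
      refine ⟨(zz d) ^ (b - (a+1)) • y, ?_⟩
      rw [hy]
      funext i
      simp only [Pi.smul_apply, smul_eq_mul, ← mul_assoc, ← pow_add]
      congr 2
      omega
    rcases ha.2 with h | h
    · omega
    · exact h hdvd
  rcases lt_trichotomy m n with h | h | h
  · exact absurd (key m n h hn' hm hn) (by simp)
  · exact h
  · exact absurd (key n m h hm' hn hm) (by simp)

lemma mulVecRight_apply (d : ℕ) (x : Fin 2 → Rtc d) (A : Matrix (Fin 2) (Fin 2) (Rtc d))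
    (i : Fin 2) : mulVecRight d x A i = A i 0 * x 0 + A i 1 * x 1 := by
  show Matrix.mulVec A x i = _
  simp [Matrix.mulVec, dotProduct, Fin.sum_univ_two]

set_option maxHeartbeats 1000000 in
lemma orbit_eq (d n : ℕ) (hn : n ≤ d + 1) (x : Fin 2 → Rtc d) (hx : MinDegEq d n x) :
    (LinearMap.ker (Matrix.traceLinearMap (Fin 2) (Rtc d) (Rtc d))).map (mulVecRight d x)
      = LinearMap.range ((LinearMap.lsmul (Rtc d) (Fin 2 → Rtc d)) ((zz d) ^ n)) := by
  obtain ⟨y, hy⟩ := hx.1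
  have hx0 : x 0 = (zz d) ^ n * y 0 := by rw [hy]; simp
  have hx1 : x 1 = (zz d) ^ n * y 1 := by rw [hy]; simp
  have lsmul_app : ∀ (v : Fin 2 → Rtc d) (i : Fin 2),
      (LinearMap.lsmul (Rtc d) (Fin 2 → Rtc d)) ((zz d) ^ n) v i = (zz d) ^ n * v i := by
    intro v i; simp
  have fin2 : ∀ i : Fin 2, i = 0 ∨ i = 1 := by decide
  rcases eq_or_ne n (d + 1) with htop | hne
  · subst htop
    have hz : (zz d) ^ (d + 1) = 0 := zz_pow_eq_zero d (d+1) le_rfl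
    have hx00 : x 0 = 0 := by rw [hx0, hz, zero_mul]
    have hx10 : x 1 = 0 := by rw [hx1, hz, zero_mul]
    ext w
    simp only [Submodule.mem_map, LinearMap.mem_ker, LinearMap.mem_range]
    constructor
    · rintro ⟨A, hA, rfl⟩
      refine ⟨0, ?_⟩
      funext i
      rw [lsmul_app, mulVecRight_apply]
      rcases fin2 i with rfl | rfl <;> rw [hx00, hx10] <;> simp
    · rintro ⟨v, rfl⟩
      refine ⟨0, by simp, ?_⟩
      funext i
      rw [lsmul_app, mulVecRight_apply]
      simp [hz]
  · have hnd : n ≤ d := by omega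
    have hx2 := hx.2.resolve_left hne
    have hyunit : IsUnit (y 0) ∨ IsUnit (y 1) := by
      by_contra h
      push_neg at h
      obtain ⟨s0, hs0⟩ := (unit_or_dvd d (y 0)).resolve_left h.1
      obtain ⟨s1, hs1⟩ := (unit_or_dvd d (y 1)).resolve_left h.2
      apply hx2
      refine ⟨![s0, s1], ?_⟩
      funext i
      have : ∀ j : Fin 2, ((zz d) ^ (n+1) • ![s0, s1]) j = (zz d)^(n+1) * ![s0, s1] j := by
        intro j; simp
      rw [this]
      rcases fin2 i with rfl | rfl
      · rw [hx0, hs0]; show _ = _ * s0; ring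
      · rw [hx1, hs1]; show _ = _ * s1; ring
    ext w
    simp only [Submodule.mem_map, LinearMap.mem_ker, LinearMap.mem_range]
    constructor
    · rintro ⟨A, hA, rfl⟩
      refine ⟨A.mulVec y, ?_⟩
      funext i
      rw [lsmul_app]
      have : ∀ j : Fin 2, A.mulVec y j = A j 0 * y 0 + A j 1 * y 1 := by
        intro j; simp [Matrix.mulVec, dotProduct, Fin.sum_univ_two]
      rw [this, mulVecRight_apply]
      rcases fin2 i with rfl | rfl <;> rw [hx0, hx1] <;> ring
    · rintro ⟨v, rfl⟩
      rcases hyunit with ⟨u, hu⟩ | ⟨u, hu⟩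
      · have hui : (↑u⁻¹ : Rtc d) * (y 0) = 1 := by rw [← hu]; exact u.inv_mul
        refine ⟨!![v 0 * ↑u⁻¹, 0; (v 1 + v 0 * ↑u⁻¹ * y 1) * ↑u⁻¹, -(v 0 * ↑u⁻¹)], ?_, ?_⟩
        · show _ = 0
          simp [Matrix.traceLinearMap, Matrix.trace_fin_two]
        · funext i
          rw [mulVecRight_apply, lsmul_app]
          rcases fin2 i with rfl | rfl
          · simp only [Matrix.cons_val', Matrix.cons_val_zero, Matrix.cons_val_one,
              Matrix.head_cons, Matrix.empty_val', Matrix.cons_val_fin_one, Matrix.head_fin_const,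
              Matrix.of_apply]
            rw [hx0, hx1]
            linear_combination ((zz d)^n * v 0) * hui
          · simp only [Matrix.cons_val', Matrix.cons_val_zero, Matrix.cons_val_one,
              Matrix.head_cons, Matrix.empty_val', Matrix.cons_val_fin_one, Matrix.head_fin_const,
              Matrix.of_apply]
            rw [hx0, hx1]
            linear_combination ((zz d)^n * v 1 + (zz d)^n * v 0 * ↑u⁻¹ * y 1) * hui
      · have hui : (↑u⁻¹ : Rtc d) * (y 1) = 1 := by rw [← hu]; exact u.inv_mul
        refine ⟨!![-(v 1 * ↑u⁻¹), (v 0 + v 1 * ↑u⁻¹ * y 0) * ↑u⁻¹; 0, v 1 * ↑u⁻¹], ?_, ?_⟩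
        · show _ = 0
          simp [Matrix.traceLinearMap, Matrix.trace_fin_two]
        · funext i
          rw [mulVecRight_apply, lsmul_app]
          rcases fin2 i with rfl | rfl
          · simp only [Matrix.cons_val', Matrix.cons_val_zero, Matrix.cons_val_one,
              Matrix.head_cons, Matrix.empty_val', Matrix.cons_val_fin_one, Matrix.head_fin_const,
              Matrix.of_apply]
            rw [hx0, hx1]
            linear_combination ((zz d)^n * v 0 + (zz d)^n * v 1 * ↑u⁻¹ * y 0) * hui
          · simp only [Matrix.cons_val', Matrix.cons_val_zero, Matrix.cons_val_one,
              Matrix.head_cons, Matrix.empty_val', Matrix.cons_val_fin_one, Matrix.head_fin_const,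
              Matrix.of_apply]
            rw [hx0, hx1]
            linear_combination ((zz d)^n * v 1) * hui

noncomputable def ff (d n : ℕ) : (Fin 2 → Fin (d+1-n) → ℂ) →ₗ[ℂ] (Fin 2 → Rtc d) where
  toFun c := fun i => ∑ j, c i j • (zz d) ^ (n + (j:ℕ))
  map_add' c c' := by
    funext i
    simp [add_smul, Finset.sum_add_distrib]
  map_smul' a c := by
    funext i
    simp [Finset.smul_sum, smul_smul]

lemma ff_inj (d n : ℕ) (hn : n ≤ d + 1) : Function.Injective (ff d n) := by
  have hind : LinearIndependent ℂ (fun j : Fin (d+1-n) => (zz d) ^ (n + (j:ℕ))) := by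
    have h := (li d).comp (fun j : Fin (d+1-n) => (⟨n + (j:ℕ), by omega⟩ : Fin (d+1)))
      (fun a b hab => by
        have := congrArg Fin.val hab
        simp only at this
        exact Fin.ext (by omega))
    exact h
  have hker : ∀ c, ff d n c = 0 → c = 0 := by
    intro c hc
    funext i j
    have h1 : ∑ j, c i j • (zz d) ^ (n + (j:ℕ)) = 0 := congrFun hc i
    exact Fintype.linearIndependent_iff.1 hind (c i) h1 j
  intro c c' h
  have : ff d n (c - c') = 0 := by rw [map_sub, h, sub_self]
  have := hker _ this
  have : c - c' = 0 := this
  funext i j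
  have := congrFun (congrFun this i) j
  simpa [sub_eq_zero] using this

lemma ff_range (d n : ℕ) (hn : n ≤ d + 1) :
    LinearMap.range (ff d n) = Submodule.restrictScalars ℂ
      (LinearMap.range ((LinearMap.lsmul (Rtc d) (Fin 2 → Rtc d)) ((zz d) ^ n))) := by
  have lsmul_app : ∀ (v : Fin 2 → Rtc d) (i : Fin 2),
      (LinearMap.lsmul (Rtc d) (Fin 2 → Rtc d)) ((zz d) ^ n) v i = (zz d) ^ n * v i := by
    intro v i; simp
  ext w
  simp only [LinearMap.mem_range, Submodule.restrictScalars_mem]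
  constructor
  · rintro ⟨c, rfl⟩
    refine ⟨fun i => ∑ j, c i j • (zz d) ^ (j:ℕ), ?_⟩
    funext i
    rw [lsmul_app]
    show _ = ∑ j, c i j • (zz d) ^ (n + (j:ℕ))
    rw [Finset.mul_sum]
    refine Finset.sum_congr rfl fun j _ => ?_
    rw [mul_smul_comm, ← pow_add]
  · rintro ⟨y, rfl⟩
    choose a ha using fun i => repr_exists d (y i)
    refine ⟨fun i j => a i ⟨(j:ℕ), by omega⟩, ?_⟩
    funext i
    show ∑ j : Fin (d+1-n), a i ⟨(j:ℕ), _⟩ • (zz d) ^ (n + (j:ℕ)) = _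
    rw [lsmul_app]
    classical
    set F : ℕ → Rtc d := fun k => if h : k < d + 1 then a i ⟨k, h⟩ • (zz d) ^ (n + k) else 0
      with hF
    have h1 : ∑ j : Fin (d+1-n), a i ⟨(j:ℕ), by omega⟩ • (zz d) ^ (n + (j:ℕ))
        = ∑ j ∈ Finset.range (d+1-n), F j := by
      rw [← Fin.sum_univ_eq_sum_range F (d+1-n)]
      refine Finset.sum_congr rfl fun j _ => ?_
      rw [hF]
      beta_reduce
      rw [dif_pos (show (j:ℕ) < d + 1 by omega)]
    have h2 : ∑ k : Fin (d+1), a i k • (zz d) ^ (n + (k:ℕ))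
        = ∑ k ∈ Finset.range (d+1), F k := by
      rw [← Fin.sum_univ_eq_sum_range F (d+1)]
      refine Finset.sum_congr rfl fun k _ => ?_
      rw [hF]
      beta_reduce
      rw [dif_pos k.isLt]
    have h3 : ∑ j ∈ Finset.range (d+1-n), F j = ∑ k ∈ Finset.range (d+1), F k := by
      refine Finset.sum_subset (Finset.range_subset_range.2 (by omega)) ?_
      intro k hk hnk
      rw [Finset.mem_range] at hk
      rw [Finset.mem_range, not_lt] at hnk
      rw [hF]
      beta_reduce
      rw [dif_pos hk, zz_pow_eq_zero d (n+k) (by omega), smul_zero]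
    rw [h1, h3, ← h2, ha i, Finset.mul_sum]
    refine Finset.sum_congr rfl fun k _ => ?_
    rw [mul_smul_comm, ← pow_add]

lemma rank_eq (d n : ℕ) (hn : n ≤ d + 1) :
    Module.finrank ℂ (Submodule.restrictScalars ℂ
      (LinearMap.range ((LinearMap.lsmul (Rtc d) (Fin 2 → Rtc d)) ((zz d) ^ n))))
      = 2 * (d + 1 - n) := by
  have e1 := LinearEquiv.ofInjective (ff d n) (ff_inj d n hn)
  rw [← ff_range d n hn, ← LinearEquiv.finrank_eq e1]
  simp [Module.finrank_pi_fintype, Module.finrank_pi, Finset.sum_const]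


/-- the locus `{min.deg x = n}` equals the locus where the orbit tangent space
`𝔤_d.x` has dimension `2(d+1−n)`; this locus is contained in the linear subspace
`z^n·V_d` of dimension `2(d+1−n)` (it is `(T∖0)z^n ⊕ Tz^{n+1} ⊕ ⋯ ⊕ Tz^d`); hence the
modality of the `𝔤_d`-action on `V_d` is `0`. -/
theorem stmt5 (d n : ℕ) (hn : n ≤ d + 1) :
    (∀ x : Fin 2 → Rtc d,
      MinDegEq d n x ↔ Module.finrank ℂ (orbitTangent d x) = 2 * (d + 1 - n)) ∧
    (∀ x : Fin 2 → Rtc d, MinDegEq d n x →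
      x ∈ LinearMap.range ((LinearMap.lsmul (Rtc d) (Fin 2 → Rtc d)) ((zz d) ^ n))) ∧
    Module.finrank ℂ (Submodule.restrictScalars ℂ
      (LinearMap.range ((LinearMap.lsmul (Rtc d) (Fin 2 → Rtc d)) ((zz d) ^ n))))
      = 2 * (d + 1 - n) := by
  refine ⟨?_, ?_, rank_eq d n hn⟩
  · intro x
    constructor
    · intro hx
      unfold orbitTangent
      rw [orbit_eq d n hn x hx]
      exact rank_eq d n hn
    · intro hfin
      obtain ⟨m, hm', hm⟩ := exists_minDegEq d x
      have h2 : Module.finrank ℂ (orbitTangent d x) = 2 * (d + 1 - m) := by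
        unfold orbitTangent
        rw [orbit_eq d m hm' x hm]
        exact rank_eq d m hm'
      have heq : 2 * (d + 1 - m) = 2 * (d + 1 - n) := h2.symm.trans hfin
      have : m = n := by omega
      subst this
      exact hm
  · intro x hx
    obtain ⟨y, hy⟩ := hx.1
    exact LinearMap.mem_range.2 ⟨y, by rw [LinearMap.lsmul_apply]; exact hy.symm⟩
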